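/- Let D be a finite sequence d₁ ≥ d₂ ≥ ⋯ ≥ d_n > 0 with mean μ, and let D* denote the rescaled sequence d₁/μ, …, d_n/μ. Then f_{D*} and 1 - L_{D*} are both corner densities (on [0,1) and [0,∞) respectively), and they have the same genial entropy: -1 - ∫₀¹ f_{D*}(x) ln(x f_{D*}(x)) dx = -1 - ∫₀^∞ (1 - L_{D*}(y)) ln(y (1 - L_{D*}(y))) dy. -/

import Mathlib

open MeasureTheory

section CDHelpers

open Real Set intervalIntegral Topology Filter

lemma cd_abs_log_le (x : ℝ) (hx : 0 < x) :
    |Real.log x| ≤ 2 * x ^ (-(1/2):ℝ) + 2 * x ^ ((1/2):ℝ) := by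
  have hs : (0:ℝ) < x ^ ((1/2):ℝ) := Real.rpow_pos_of_pos hx _
  have hlog : Real.log x = 2 * Real.log (x ^ ((1/2):ℝ)) := by
    rw [Real.log_rpow hx]; ring
  rcases le_total x 1 with h1 | h1
  · have hneg : Real.log x ≤ 0 := Real.log_nonpos hx.le h1
    rw [abs_of_nonpos hneg]
    have h2 : Real.log ((x ^ ((1/2):ℝ))⁻¹) ≤ (x ^ ((1/2):ℝ))⁻¹ - 1 :=
      Real.log_le_sub_one_of_pos (by positivity)
    rw [Real.log_inv] at h2
    have h3 : -Real.log x ≤ 2 * (x ^ ((1/2):ℝ))⁻¹ := by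
      rw [hlog]; nlinarith
    rw [← Real.rpow_neg hx.le] at h3
    norm_num at h3 ⊢
    nlinarith [hs.le, h3]
  · have hpos : 0 ≤ Real.log x := Real.log_nonneg h1
    rw [abs_of_nonneg hpos]
    have h2 : Real.log (x ^ ((1/2):ℝ)) ≤ x ^ ((1/2):ℝ) - 1 :=
      Real.log_le_sub_one_of_pos hs
    have hinv : (0:ℝ) < x ^ (-(1/2):ℝ) := Real.rpow_pos_of_pos hx _
    nlinarith

lemma cd_intervalIntegrable_log (a b : ℝ) (ha : 0 ≤ a) (hb : 0 ≤ b) :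
    IntervalIntegrable Real.log volume a b := by
  suffices H : ∀ c : ℝ, 0 ≤ c → IntervalIntegrable Real.log volume 0 c by
    exact (H a ha).symm.trans (H b hb)
  intro c hc
  rw [intervalIntegrable_iff_integrableOn_Ioc_of_le hc]
  have hg : IntegrableOn (fun x : ℝ => 2 * x ^ (-(1/2):ℝ) + 2 * x ^ ((1/2):ℝ)) (Set.Ioc 0 c) := by
    rw [← intervalIntegrable_iff_integrableOn_Ioc_of_le hc]
    exact ((intervalIntegral.intervalIntegrable_rpow' (by norm_num)).const_mul 2).add
      ((intervalIntegral.intervalIntegrable_rpow' (by norm_num)).const_mul 2)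
  refine hg.integrable.mono Real.measurable_log.aestronglyMeasurable ?_
  refine (ae_restrict_iff' measurableSet_Ioc).2 (ae_of_all _ fun x hx => ?_)
  have hx0 : 0 < x := hx.1
  have h1 := cd_abs_log_le x hx0
  have h2 : (0:ℝ) ≤ 2 * x ^ (-(1/2):ℝ) + 2 * x ^ ((1/2):ℝ) := by positivity
  simp only [Real.norm_eq_abs]
  rwa [abs_of_nonneg h2]

lemma cd_integral_log_zero (b : ℝ) (hb : 0 ≤ b) :
    ∫ x in (0:ℝ)..b, Real.log x = b * Real.log b - b := by
  rcases eq_or_lt_of_le hb with rfl | hb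
  · simp
  have hcont : ContinuousWithinAt (fun t => ∫ x in (0:ℝ)..t, Real.log x) (Set.Icc 0 b) 0 := by
    apply intervalIntegral.continuousWithinAt_primitive (by simp)
    simp only [min_self, max_eq_right hb.le]
    exact cd_intervalIntegrable_log 0 b le_rfl hb.le
  haveI : (𝓝[Set.Ioo (0:ℝ) b] 0).NeBot := by
    apply mem_closure_iff_nhdsWithin_neBot.1
    rw [closure_Ioo hb.ne]
    exact Set.left_mem_Icc.2 hb.le
  have h1 : Filter.Tendsto (fun t => ∫ x in (0:ℝ)..t, Real.log x) (𝓝[Set.Ioo (0:ℝ) b] 0) (𝓝 0) := by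
    have := hcont.tendsto
    simp only [intervalIntegral.integral_same] at this
    exact this.mono_left (nhdsWithin_mono _ Set.Ioo_subset_Icc_self)
  have h2 : Filter.Tendsto (fun t : ℝ => (∫ x in (0:ℝ)..b, Real.log x) - (b * Real.log b - t * Real.log t - b + t))
      (𝓝[Set.Ioo (0:ℝ) b] 0) (𝓝 ((∫ x in (0:ℝ)..b, Real.log x) - (b * Real.log b - b))) := by
    have hml : Filter.Tendsto (fun t : ℝ => t * Real.log t) (𝓝 (0:ℝ)) (𝓝 0) := by
      have := Real.continuous_mul_log.tendsto 0
      simpa using this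
    have h3 : Filter.Tendsto (fun t : ℝ => (∫ x in (0:ℝ)..b, Real.log x) - (b * Real.log b - t * Real.log t - b + t))
        (𝓝 (0:ℝ)) (𝓝 ((∫ x in (0:ℝ)..b, Real.log x) - (b * Real.log b - 0 - b + 0))) :=
      Filter.Tendsto.const_sub _ (((Filter.Tendsto.const_sub _ hml).sub_const _).add tendsto_id)
    simp only [sub_zero, add_zero] at h3
    exact h3.mono_left nhdsWithin_le_nhds
  have h1' : Filter.Tendsto (fun t : ℝ => (∫ x in (0:ℝ)..b, Real.log x) - (b * Real.log b - t * Real.log t - b + t))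
      (𝓝[Set.Ioo (0:ℝ) b] 0) (𝓝 0) := by
    apply h1.congr'
    filter_upwards [self_mem_nhdsWithin] with t ht
    have hsplit : (∫ x in (0:ℝ)..t, Real.log x) + (∫ x in t..b, Real.log x) = ∫ x in (0:ℝ)..b, Real.log x :=
      intervalIntegral.integral_add_adjacent_intervals (cd_intervalIntegrable_log 0 t le_rfl ht.1.le)
        (cd_intervalIntegrable_log t b ht.1.le hb.le)
    have hval : (∫ x in t..b, Real.log x) = b * Real.log b - t * Real.log t - b + t :=
      integral_log
    linarith
  have := tendsto_nhds_unique h1' h2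
  linarith [this]

lemma cd_intervalIntegrable_congr_Ioo {f g : ℝ → ℝ} {a b : ℝ} (hab : a ≤ b)
    (h : ∀ x ∈ Set.Ioo a b, f x = g x) (hg : IntervalIntegrable g volume a b) :
    IntervalIntegrable f volume a b := by
  rw [intervalIntegrable_iff_integrableOn_Ioc_of_le hab, integrableOn_Ioc_iff_integrableOn_Ioo] at hg ⊢
  exact hg.congr_fun (fun x hx => (h x hx).symm) measurableSet_Ioo

lemma cd_integral_congr_Ioo {f g : ℝ → ℝ} {a b : ℝ} (hab : a ≤ b)
    (h : ∀ x ∈ Set.Ioo a b, f x = g x) :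
    ∫ x in a..b, f x = ∫ x in a..b, g x := by
  rw [intervalIntegral.integral_of_le hab, intervalIntegral.integral_of_le hab,
    MeasureTheory.integral_Ioc_eq_integral_Ioo, MeasureTheory.integral_Ioc_eq_integral_Ioo]
  exact setIntegral_congr_fun measurableSet_Ioo h

lemma cd_stepconst {f : ℝ → ℝ} {a b c : ℝ} (hab : a ≤ b) (h : ∀ x ∈ Set.Ioo a b, f x = c) :
    IntervalIntegrable f volume a b ∧ (∫ x in a..b, f x) = c * (b - a) := by
  constructor
  · exact cd_intervalIntegrable_congr_Ioo hab h intervalIntegrable_const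
  · rw [cd_integral_congr_Ioo hab h, intervalIntegral.integral_const]
    simp [mul_comm]

lemma cd_steplog {f : ℝ → ℝ} {a b c : ℝ} (ha : 0 ≤ a) (hab : a ≤ b) (hc : 0 < c)
    (h : ∀ x ∈ Set.Ioo a b, f x = c * Real.log (x * c)) :
    IntervalIntegrable f volume a b ∧
      (∫ x in a..b, f x)
        = c * ((b * Real.log b - b) - (a * Real.log a - a)) + (b - a) * (c * Real.log c) := by
  have hb : 0 ≤ b := le_trans ha hab
  have hg : ∀ x ∈ Set.Ioo a b, f x = c * Real.log x + c * Real.log c := by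
    intro x hx
    have hx0 : 0 < x := lt_of_le_of_lt ha hx.1
    rw [h x hx, Real.log_mul hx0.ne' hc.ne']
    ring
  have hgi : IntervalIntegrable (fun x => c * Real.log x + c * Real.log c) volume a b :=
    ((cd_intervalIntegrable_log a b ha hb).const_mul c).add intervalIntegrable_const
  refine ⟨cd_intervalIntegrable_congr_Ioo hab hg hgi, ?_⟩
  rw [cd_integral_congr_Ioo hab hg]
  have hlogint : (∫ x in a..b, Real.log x) = (b * Real.log b - b) - (a * Real.log a - a) := by
    have h1 : (∫ x in (0:ℝ)..a, Real.log x) + (∫ x in a..b, Real.log x)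
        = ∫ x in (0:ℝ)..b, Real.log x :=
      intervalIntegral.integral_add_adjacent_intervals (cd_intervalIntegrable_log 0 a le_rfl ha)
        (cd_intervalIntegrable_log a b ha hb)
    rw [cd_integral_log_zero a ha, cd_integral_log_zero b hb] at h1
    linarith
  rw [intervalIntegral.integral_add ((cd_intervalIntegrable_log a b ha hb).const_mul c)
    intervalIntegrable_const, intervalIntegral.integral_const_mul, hlogint,
    intervalIntegral.integral_const]
  simp only [smul_eq_mul]

lemma cd_setIntegral_Ico_eq_intervalIntegral (f : ℝ → ℝ) (a b : ℝ) (hab : a ≤ b) :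
    ∫ x in Set.Ico a b, f x = ∫ x in a..b, f x := by
  rw [MeasureTheory.integral_Ico_eq_integral_Ioo, intervalIntegral.integral_of_le hab,
    MeasureTheory.integral_Ioc_eq_integral_Ioo]

lemma cd_abel1 (n : ℕ) (u v : ℕ → ℝ) (h1 : u (n+1) * v n = 0) (h0 : u 1 * v 0 = 0) :
    ∑ i ∈ Finset.range n, u (i+1) * (v (i+1) - v i)
      = ∑ i ∈ Finset.range n, (u (i+1) - u (i+2)) * v (i+1) := by
  have h := Finset.sum_range_sub (fun i => u (i+1) * v i) n
  have key : ∑ i ∈ Finset.range n, (u (i+1) * (v (i+1) - v i) - (u (i+1) - u (i+2)) * v (i+1))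
      = ∑ i ∈ Finset.range n, ((fun i => u (i+1) * v i) (i+1) - (fun i => u (i+1) * v i) i) :=
    Finset.sum_congr rfl fun i _ => by ring
  rw [h] at key
  rw [Finset.sum_sub_distrib] at key
  linarith [key, h1, h0]

lemma cd_abel2 (n : ℕ) (u v : ℕ → ℝ) (h1 : u n * v (n+1) = 0) (h0 : u 0 * v 1 = 0) :
    ∑ i ∈ Finset.range n, u (i+1) * (v (i+1) - v (i+2))
      = ∑ i ∈ Finset.range n, (u (i+1) - u i) * v (i+1) := by
  have h := Finset.sum_range_sub (fun i => u i * v (i+1)) n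
  have key : ∑ i ∈ Finset.range n, ((u (i+1) - u i) * v (i+1) - u (i+1) * (v (i+1) - v (i+2)))
      = ∑ i ∈ Finset.range n, ((fun i => u i * v (i+1)) (i+1) - (fun i => u i * v (i+1)) i) :=
    Finset.sum_congr rfl fun i _ => by ring
  rw [h] at key
  rw [Finset.sum_sub_distrib] at key
  linarith [key, h1, h0]

end CDHelpers

/-- A corner density: `I ∪ {0}` is a connected interval contained in `[0,∞)`,
`f` is nonnegative and monotone decreasing on `I`, and `∫_I f = 1`. -/
def IsCornerDensity (I : Set ℝ) (f : ℝ → ℝ) : Prop :=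
  I ⊆ Set.Ici 0 ∧ (I ∪ {0}).OrdConnected ∧ (∀ x ∈ I, 0 ≤ f x) ∧
    AntitoneOn f I ∧ (∫ x in I, f x) = 1

/-- For a sequence `d₁ ≥ ⋯ ≥ d_n > 0` with mean `μ`, both the step
function `f_{D*}` (value `d_i/μ` on `[(i-1)/n, i/n)`) and the function `1 - L_{D*}`
(where `L_{D*}` is the empirical CDF of the `d_i/μ`) are corner densities, and they
have the same genial entropy. -/
theorem fstar_and_one_sub_Lstar_cornerDensities_same_genialEntropy
    (n : ℕ) (hn : 0 < n) (d : ℕ → ℝ)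
    (hmono : ∀ i j, 1 ≤ i → i ≤ j → j ≤ n → d j ≤ d i)
    (hpos : ∀ i, 1 ≤ i → i ≤ n → 0 < d i)
    (μ : ℝ) (hμ : μ = (∑ i ∈ Finset.Icc 1 n, d i) / n)
    (fstar : ℝ → ℝ)
    (hfstar : ∀ i, 1 ≤ i → i ≤ n →
      ∀ x ∈ Set.Ico (((i:ℝ) - 1) / n) ((i:ℝ) / n), fstar x = d i / μ)
    (Lstar : ℝ → ℝ)
    (hLstar : ∀ y, 0 ≤ y →
      Lstar y = ((Finset.Icc 1 n).filter (fun i => d i / μ ≤ y)).card / n) :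
    IsCornerDensity (Set.Ico 0 1) fstar ∧
    IsCornerDensity (Set.Ici 0) (fun y => 1 - Lstar y) ∧
    (-1 - ∫ x in Set.Ico (0:ℝ) 1, fstar x * Real.log (x * fstar x)) =
      (-1 - ∫ y in Set.Ici (0:ℝ), (1 - Lstar y) * Real.log (y * (1 - Lstar y))) := by
  have hnR : (0:ℝ) < n := by exact_mod_cast hn
  have hμpos : 0 < μ := by
    rw [hμ]
    apply div_pos
    · apply Finset.sum_pos
      · intro i hi
        rcases Finset.mem_Icc.1 hi with ⟨h1, h2⟩
        exact hpos i h1 h2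
      · exact ⟨1, Finset.mem_Icc.2 ⟨le_rfl, hn⟩⟩
    · exact hnR
  set E : ℕ → ℝ := fun j => if 1 ≤ j ∧ j ≤ n then d j / μ else 0 with hEdef
  have hEval : ∀ j, 1 ≤ j → j ≤ n → E j = d j / μ := by
    intro j h1 h2; simp only [hEdef]; rw [if_pos ⟨h1, h2⟩]
  have hEtop : ∀ j, n < j → E j = 0 := by
    intro j hj; simp only [hEdef]; rw [if_neg (by omega)]
  have hEnn : ∀ j, 0 ≤ E j := by
    intro j
    by_cases hj : 1 ≤ j ∧ j ≤ n
    · rw [hEval j hj.1 hj.2]; exact (div_pos (hpos j hj.1 hj.2) hμpos).le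
    · simp only [hEdef]; rw [if_neg hj]
  have hEpos : ∀ j, 1 ≤ j → j ≤ n → 0 < E j := by
    intro j h1 h2; rw [hEval j h1 h2]; exact div_pos (hpos j h1 h2) hμpos
  have hEanti : ∀ i j, 1 ≤ i → i ≤ j → E j ≤ E i := by
    intro i j h1 hij
    by_cases hj : j ≤ n
    · rw [hEval i h1 (le_trans hij hj), hEval j (le_trans h1 hij) hj]
      exact (div_le_div_iff_of_pos_right hμpos).2 (hmono i j h1 hij hj)
    · rw [hEtop j (by omega)]; exact hEnn i
  have hdsum : ∑ i ∈ Finset.Icc 1 n, d i = μ * n := by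
    rw [hμ]; field_simp
  have hS2 : ∑ k ∈ Finset.range n, E (k+1) = n := by
    have h1 : ∀ k ∈ Finset.range n, E (k+1) = d (k+1) / μ := by
      intro k hk
      have hk' := Finset.mem_range.1 hk
      exact hEval _ (by omega) (by omega)
    rw [Finset.sum_congr rfl h1, ← Finset.sum_div]
    have h2 : ∑ k ∈ Finset.range n, d (k+1) = ∑ i ∈ Finset.Icc 1 n, d i := by
      rw [← Finset.Ico_add_one_right_eq_Icc, Finset.sum_Ico_eq_sum_range]
      simp [Nat.add_comm]
    rw [h2, hdsum]
    field_simp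
  -- step values of fstar
  have hfs : ∀ k, k < n → ∀ x ∈ Set.Ico ((k:ℝ)/n) (((k:ℝ)+1)/n), fstar x = E (k+1) := by
    intro k hk x hx
    rw [hEval (k+1) (by omega) (by omega)]
    apply hfstar (k+1) (by omega) (by omega)
    have h1 : (((k+1:ℕ):ℝ) - 1)/(n:ℝ) = (k:ℝ)/n := by push_cast; ring
    have h2 : ((k+1:ℕ):ℝ)/(n:ℝ) = ((k:ℝ)+1)/n := by push_cast; ring
    rw [h1, h2]; exact hx
  -- locating a point of [0,1) in the partition
  have hloc : ∀ x : ℝ, 0 ≤ x → x < 1 →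
      ⌊x * n⌋₊ < n ∧ x ∈ Set.Ico ((⌊x * n⌋₊:ℝ)/n) (((⌊x * n⌋₊:ℝ)+1)/n) := by
    intro x hx0 hx1
    have hxn : 0 ≤ x * n := mul_nonneg hx0 hnR.le
    have hfl : (⌊x * n⌋₊ : ℝ) ≤ x * n := Nat.floor_le hxn
    have hfu : x * n < ⌊x * n⌋₊ + 1 := Nat.lt_floor_add_one _
    have hlt : ⌊x * n⌋₊ < n := by
      rw [Nat.floor_lt hxn]
      nlinarith
    refine ⟨hlt, ⟨?_, ?_⟩⟩
    · rw [div_le_iff₀ hnR]; exact hfl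
    · rw [lt_div_iff₀ hnR]; exact hfu
  -- corner density 1
  have hcd1 : IsCornerDensity (Set.Ico 0 1) fstar := by
    refine ⟨fun x hx => hx.1, ?_, ?_, ?_, ?_⟩
    · have hu : Set.Ico (0:ℝ) 1 ∪ {0} = Set.Ico 0 1 := by
        apply Set.union_eq_self_of_subset_right
        simp only [Set.singleton_subset_iff, Set.mem_Ico]
        norm_num
      rw [hu]; exact Set.ordConnected_Ico
    · intro x hx
      obtain ⟨hlt, hmem⟩ := hloc x hx.1 hx.2
      rw [hfs _ hlt x hmem]
      exact hEnn _
    · intro x hx y hy hxy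
      obtain ⟨hltx, hmemx⟩ := hloc x hx.1 hx.2
      obtain ⟨hlty, hmemy⟩ := hloc y hy.1 hy.2
      rw [hfs _ hltx x hmemx, hfs _ hlty y hmemy]
      refine hEanti _ _ (by omega) ?_
      have := Nat.floor_mono (mul_le_mul_of_nonneg_right hxy hnR.le)
      omega
    · -- ∫ fstar = 1
      have hpieceA : ∀ k, k < n → IntervalIntegrable fstar volume ((k:ℝ)/n) (((k+1:ℕ):ℝ)/n) ∧
          (∫ x in ((k:ℝ)/n)..(((k+1:ℕ):ℝ)/n), fstar x) = E (k+1) * ((((k+1:ℕ):ℝ)/n) - (k:ℝ)/n) := by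
        intro k hk
        have hcast : ((k+1:ℕ):ℝ)/(n:ℝ) = ((k:ℝ)+1)/n := by push_cast; ring
        apply cd_stepconst
        · rw [hcast, div_le_div_iff_of_pos_right hnR]
          linarith
        · intro x hx
          apply hfs k hk
          refine ⟨hx.1.le, ?_⟩
          rw [← hcast]
          exact hx.2
      have hadj := intervalIntegral.sum_integral_adjacent_intervals
        (a := fun k : ℕ => (k:ℝ)/n) (μ := volume) (n := n) (fun k hk => (hpieceA k hk).1)
      simp only [Nat.cast_zero, zero_div] at hadj
      have hn1 : ((n:ℝ))/(n:ℝ) = 1 := div_self hnR.ne'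
      rw [hn1] at hadj
      rw [cd_setIntegral_Ico_eq_intervalIntegral _ _ _ (by norm_num), ← hadj]
      have hterm : ∀ k ∈ Finset.range n,
          (∫ x in (((k:ℕ):ℝ)/n)..(((k+1:ℕ):ℝ)/n), fstar x) = E (k+1) * (1/n) := by
        intro k hk
        rw [(hpieceA k (Finset.mem_range.1 hk)).2]
        congr 1
        push_cast
        field_simp
        ring
      rw [Finset.sum_congr rfl hterm]
      have : ∑ k ∈ Finset.range n, E (k+1) * (1/(n:ℝ)) = (∑ k ∈ Finset.range n, E (k+1)) * (1/n) := by
        rw [Finset.sum_mul]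
      rw [this, hS2]
      field_simp
  -- Lstar values
  have hL1 : ∀ j, 1 ≤ j → j ≤ n → ∀ y, E (j+1) ≤ y → y < E j → 1 - Lstar y = (j:ℝ)/n := by
    intro j hj1 hjn y hy1 hy2
    have hy0 : 0 ≤ y := le_trans (hEnn _) hy1
    rw [hLstar y hy0]
    have hfe : (Finset.Icc 1 n).filter (fun i => d i / μ ≤ y) = Finset.Icc (j+1) n := by
      ext i
      simp only [Finset.mem_filter, Finset.mem_Icc]
      constructor
      · rintro ⟨⟨hi1, hi2⟩, hile⟩
        refine ⟨?_, hi2⟩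
        by_contra hcon
        push_neg at hcon
        have h4 : E j ≤ E i := hEanti i j hi1 (by omega)
        rw [hEval i hi1 hi2] at h4
        have h5 : E j ≤ y := le_trans h4 hile
        linarith
      · rintro ⟨hi1, hi2⟩
        have hi1' : 1 ≤ i := by omega
        refine ⟨⟨hi1', hi2⟩, ?_⟩
        have h5 : E i ≤ E (j+1) := hEanti (j+1) i (by omega) hi1
        rw [hEval i hi1' hi2] at h5
        exact le_trans h5 hy1
    rw [hfe, Nat.card_Icc]
    have hcast : ((n + 1 - (j+1) : ℕ) : ℝ) = (n:ℝ) - (j:ℝ) := by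
      have he : n + 1 - (j+1) = n - j := by omega
      rw [he, Nat.cast_sub hjn]
    rw [hcast]
    field_simp
    ring
  have hE1pos : 0 < E 1 := hEpos 1 le_rfl hn
  have hLtop : ∀ y, E 1 ≤ y → 1 - Lstar y = 0 := by
    intro y hy
    have hy0 : 0 ≤ y := le_trans hE1pos.le hy
    rw [hLstar y hy0]
    have hfe : (Finset.Icc 1 n).filter (fun i => d i / μ ≤ y) = Finset.Icc 1 n := by
      apply Finset.filter_true_of_mem
      intro i hi
      rcases Finset.mem_Icc.1 hi with ⟨hi1, hi2⟩
      have h5 : E i ≤ E 1 := hEanti 1 i le_rfl hi1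
      rw [hEval i hi1 hi2] at h5
      exact le_trans h5 hy
    rw [hfe, Nat.card_Icc]
    simp only [Nat.add_sub_cancel]
    rw [div_self hnR.ne']
    ring
  -- the partition points for the Lstar side
  set b : ℕ → ℝ := fun k => E (n + 1 - k) with hbdef
  have hb0 : b 0 = 0 := by
    simp only [hbdef, Nat.sub_zero]
    exact hEtop (n+1) (by omega)
  have hbn : b n = E 1 := by
    simp only [hbdef]
    congr 1
    omega
  have hbnn : ∀ k, 0 ≤ b k := fun k => hEnn _
  have hbmono : ∀ k, k < n → b k ≤ b (k+1) := by
    intro k hk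
    simp only [hbdef]
    apply hEanti (n+1-(k+1)) (n+1-k) (by omega) (by omega)
  have hbval : ∀ k, k < n → ∀ y, b k ≤ y → y < b (k+1) → 1 - Lstar y = ((n-k:ℕ):ℝ)/n := by
    intro k hk y hy1 hy2
    have e1 : n + 1 - k = (n - k) + 1 := by omega
    have e2 : n + 1 - (k+1) = n - k := by omega
    apply hL1 (n-k) (by omega) (by omega) y
    · rw [← e1]; exact hy1
    · rw [← e2]; exact hy2
  -- splitting the integral over [0,∞)
  have hsplit : ∀ h : ℝ → ℝ, (∀ y, E 1 ≤ y → h y = 0) →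
      (∀ k, k < n → IntervalIntegrable h volume (b k) (b (k+1))) →
      ∫ y in Set.Ici (0:ℝ), h y = ∑ k ∈ Finset.range n, ∫ y in (b k)..(b (k+1)), h y := by
    intro h hz hint
    have hII : IntervalIntegrable h volume (b 0) (b n) := IntervalIntegrable.trans_iterate hint
    rw [hb0, hbn] at hII
    have hIO : IntegrableOn h (Set.Ico 0 (E 1)) := by
      rw [integrableOn_Ico_iff_integrableOn_Ioo]
      rw [intervalIntegrable_iff_integrableOn_Ioc_of_le hE1pos.le,
        integrableOn_Ioc_iff_integrableOn_Ioo] at hII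
      exact hII
    have hIT : IntegrableOn h (Set.Ici (E 1)) :=
      (integrableOn_zero).congr_fun (fun y hy => (hz y hy).symm) measurableSet_Ici
    have hdisj : Disjoint (Set.Ico (0:ℝ) (E 1)) (Set.Ici (E 1)) := by
      rw [Set.disjoint_left]
      intro y hy1 hy2
      exact absurd hy2 (not_le.2 hy1.2)
    have hU : Set.Ico (0:ℝ) (E 1) ∪ Set.Ici (E 1) = Set.Ici 0 := Set.Ico_union_Ici_eq_Ici hE1pos.le
    rw [← hU, setIntegral_union hdisj measurableSet_Ici hIO hIT]
    have h2 : ∫ y in Set.Ici (E 1), h y = 0 := by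
      rw [setIntegral_congr_fun measurableSet_Ici (fun y hy => hz y hy)]
      simp
    rw [h2, add_zero, cd_setIntegral_Ico_eq_intervalIntegral _ _ _ hE1pos.le, ← hb0, ← hbn]
    exact (intervalIntegral.sum_integral_adjacent_intervals hint).symm
  -- grid function
  set u : ℕ → ℝ := fun j => (j:ℝ)/n with hudef
  -- telescoping: ∑ u(k+1) (E(k+1) - E(k+2)) = 1
  have habel_u : ∑ k ∈ Finset.range n, u (k+1) * (E (k+1) - E (k+2)) = 1 := by
    have h := cd_abel2 n u E (by rw [hEtop (n+1) (by omega)]; ring) (by simp [hudef])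
    rw [h]
    have h2 : ∀ k ∈ Finset.range n, (u (k+1) - u k) * E (k+1) = E (k+1) * (1/(n:ℝ)) := by
      intro k hk
      simp only [hudef]
      push_cast
      field_simp
      ring
    rw [Finset.sum_congr rfl h2, ← Finset.sum_mul, hS2]
    field_simp
  -- corner density 2
  have hcd2 : IsCornerDensity (Set.Ici 0) (fun y => 1 - Lstar y) := by
    refine ⟨fun y hy => hy, ?_, ?_, ?_, ?_⟩
    · have hu : Set.Ici (0:ℝ) ∪ {0} = Set.Ici 0 := by
        apply Set.union_eq_self_of_subset_right
        simp
      rw [hu]; exact Set.ordConnected_Ici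
    · intro y hy
      simp only
      rw [hLstar y hy, sub_nonneg]
      have h1 : (Finset.filter (fun i => d i / μ ≤ y) (Finset.Icc 1 n)).card ≤ n := by
        have := Finset.card_filter_le (Finset.Icc 1 n) (fun i => d i / μ ≤ y)
        rw [Nat.card_Icc] at this
        omega
      rw [div_le_one hnR]
      exact_mod_cast h1
    · intro y hy y' hy' hyy'
      simp only
      rw [hLstar y hy, hLstar y' hy']
      have h1 : (Finset.filter (fun i => d i / μ ≤ y) (Finset.Icc 1 n)).card ≤
          (Finset.filter (fun i => d i / μ ≤ y') (Finset.Icc 1 n)).card := by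
        apply Finset.card_le_card
        intro i hi
        rw [Finset.mem_filter] at hi ⊢
        exact ⟨hi.1, hi.2.trans hyy'⟩
      have h2 : ((Finset.filter (fun i => d i / μ ≤ y) (Finset.Icc 1 n)).card : ℝ) ≤
          ((Finset.filter (fun i => d i / μ ≤ y') (Finset.Icc 1 n)).card : ℝ) := by
        exact_mod_cast h1
      apply sub_le_sub_left
      rw [div_le_div_iff_of_pos_right hnR]
      exact h2
    · -- integral = 1
      show (∫ y in Set.Ici (0:ℝ), (1 - Lstar y)) = 1
      have hpieceB : ∀ k, k < n → IntervalIntegrable (fun y => 1 - Lstar y) volume (b k) (b (k+1)) ∧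
          (∫ y in (b k)..(b (k+1)), (1 - Lstar y)) = ((n-k:ℕ):ℝ)/n * (b (k+1) - b k) := by
        intro k hk
        apply cd_stepconst (hbmono k hk)
        intro y hy
        exact hbval k hk y hy.1.le hy.2
      rw [hsplit _ (fun y hy => hLtop y hy) (fun k hk => (hpieceB k hk).1)]
      rw [Finset.sum_congr rfl (fun k hk => (hpieceB k (Finset.mem_range.1 hk)).2)]
      have hrefl1 : ∑ k ∈ Finset.range n, ((n-k:ℕ):ℝ)/n * (b (k+1) - b k)
          = ∑ k ∈ Finset.range n, u (k+1) * (E (k+1) - E (k+2)) := by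
        rw [← Finset.sum_range_reflect (fun k => ((n-k:ℕ):ℝ)/n * (b (k+1) - b k)) n]
        apply Finset.sum_congr rfl
        intro k hk
        have hk' := Finset.mem_range.1 hk
        simp only [hudef, hbdef]
        rw [show n - (n-1-k) = k+1 from by omega, show n+1 - (n-1-k+1) = k+1 from by omega,
          show n+1 - (n-1-k) = k+2 from by omega]
      rw [hrefl1, habel_u]
  -- entropy sums setup
  set W : ℕ → ℝ := fun j => E j * Real.log (E j) - E j with hWdef
  set V : ℕ → ℝ := fun j => u j * Real.log (u j) - u j with hVdef
  -- pieces of the fstar entropy integral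
  have hpieceA2 : ∀ k, k < n →
      IntervalIntegrable (fun x => fstar x * Real.log (x * fstar x)) volume ((k:ℝ)/n) (((k+1:ℕ):ℝ)/n) ∧
      (∫ x in ((k:ℝ)/n)..(((k+1:ℕ):ℝ)/n), fstar x * Real.log (x * fstar x))
        = E (k+1) * (((((k+1:ℕ):ℝ)/n) * Real.log ((((k+1:ℕ):ℝ)/n)) - (((k+1:ℕ):ℝ)/n)) - (((k:ℝ)/n) * Real.log ((k:ℝ)/n) - (k:ℝ)/n))
          + ((((k+1:ℕ):ℝ)/n) - (k:ℝ)/n) * (E (k+1) * Real.log (E (k+1))) := by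
    intro k hk
    have hcast : ((k+1:ℕ):ℝ)/(n:ℝ) = ((k:ℝ)+1)/n := by push_cast; ring
    refine cd_steplog (by positivity) ?_ (hEpos (k+1) (by omega) (by omega)) ?_
    · rw [hcast, div_le_div_iff_of_pos_right hnR]; linarith
    · intro x hx
      rw [hfs k hk x ⟨hx.1.le, by rw [← hcast]; exact hx.2⟩]
  have hIA : (∫ x in Set.Ico (0:ℝ) 1, fstar x * Real.log (x * fstar x))
      = ∑ k ∈ Finset.range n, (E (k+1) * (V (k+1) - V k)
          + (1/(n:ℝ)) * (E (k+1) * Real.log (E (k+1)))) := by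
    have hadj := intervalIntegral.sum_integral_adjacent_intervals
      (a := fun k : ℕ => (k:ℝ)/n) (μ := volume) (n := n) (fun k hk => (hpieceA2 k hk).1)
    simp only [Nat.cast_zero, zero_div] at hadj
    rw [div_self hnR.ne'] at hadj
    rw [cd_setIntegral_Ico_eq_intervalIntegral _ _ _ (by norm_num), ← hadj]
    apply Finset.sum_congr rfl
    intro k hk
    rw [(hpieceA2 k (Finset.mem_range.1 hk)).2]
    simp only [hVdef, hudef]
    push_cast
    ring
  -- pieces of the Lstar entropy integral
  have hb1 : ∀ k, k < n → (0:ℝ) < ((n-k:ℕ):ℝ)/n := by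
    intro k hk
    have h1 : 0 < n - k := by omega
    apply div_pos ?_ hnR
    exact_mod_cast h1
  have hpieceB2 : ∀ k, k < n →
      IntervalIntegrable (fun y => (1 - Lstar y) * Real.log (y * (1 - Lstar y))) volume (b k) (b (k+1)) ∧
      (∫ y in (b k)..(b (k+1)), (1 - Lstar y) * Real.log (y * (1 - Lstar y)))
        = ((n-k:ℕ):ℝ)/n * ((b (k+1) * Real.log (b (k+1)) - b (k+1)) - (b k * Real.log (b k) - b k))
          + (b (k+1) - b k) * (((n-k:ℕ):ℝ)/n * Real.log (((n-k:ℕ):ℝ)/n)) := by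
    intro k hk
    refine cd_steplog (hbnn k) (hbmono k hk) (hb1 k hk) ?_
    intro y hy
    rw [hbval k hk y hy.1.le hy.2]
  have hIB : (∫ y in Set.Ici (0:ℝ), (1 - Lstar y) * Real.log (y * (1 - Lstar y)))
      = ∑ k ∈ Finset.range n, (((n-k:ℕ):ℝ)/n * ((b (k+1) * Real.log (b (k+1)) - b (k+1)) - (b k * Real.log (b k) - b k))
          + (b (k+1) - b k) * (((n-k:ℕ):ℝ)/n * Real.log (((n-k:ℕ):ℝ)/n))) := by
    have hz : ∀ y, E 1 ≤ y → (1 - Lstar y) * Real.log (y * (1 - Lstar y)) = 0 := by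
      intro y hy
      rw [hLtop y hy]
      simp
    rw [hsplit _ hz (fun k hk => (hpieceB2 k hk).1)]
    exact Finset.sum_congr rfl (fun k hk => (hpieceB2 k (Finset.mem_range.1 hk)).2)
  -- reflect the Lstar entropy sum
  have hreflB : ∑ k ∈ Finset.range n, (((n-k:ℕ):ℝ)/n * ((b (k+1) * Real.log (b (k+1)) - b (k+1)) - (b k * Real.log (b k) - b k))
          + (b (k+1) - b k) * (((n-k:ℕ):ℝ)/n * Real.log (((n-k:ℕ):ℝ)/n)))
      = ∑ k ∈ Finset.range n, (u (k+1) * (W (k+1) - W (k+2))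
          + (E (k+1) - E (k+2)) * (u (k+1) * Real.log (u (k+1)))) := by
    rw [← Finset.sum_range_reflect (fun k => ((n-k:ℕ):ℝ)/n * ((b (k+1) * Real.log (b (k+1)) - b (k+1)) - (b k * Real.log (b k) - b k))
          + (b (k+1) - b k) * (((n-k:ℕ):ℝ)/n * Real.log (((n-k:ℕ):ℝ)/n))) n]
    apply Finset.sum_congr rfl
    intro k hk
    have hk' := Finset.mem_range.1 hk
    simp only [hudef, hbdef, hWdef]
    rw [show n - (n-1-k) = k+1 from by omega, show n+1 - (n-1-k+1) = k+1 from by omega,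
      show n+1 - (n-1-k) = k+2 from by omega]
  -- telescoping identities
  have habel_A : ∑ k ∈ Finset.range n, E (k+1) * (V (k+1) - V k)
      = ∑ k ∈ Finset.range n, (E (k+1) - E (k+2)) * V (k+1) := by
    apply cd_abel1 n E V
    · rw [hEtop (n+1) (by omega)]; ring
    · have hV0 : V 0 = 0 := by simp [hVdef, hudef]
      rw [hV0]; ring
  have habel_W : ∑ k ∈ Finset.range n, u (k+1) * (W (k+1) - W (k+2))
      = ∑ k ∈ Finset.range n, (u (k+1) - u k) * W (k+1) := by
    apply cd_abel2 n u W
    · have hW : W (n+1) = 0 := by rw [hWdef]; simp only; rw [hEtop (n+1) (by omega)]; simp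
      rw [hW]; ring
    · have hu0 : u 0 = 0 := by simp [hudef]
      rw [hu0]; ring
  have habel_E : ∑ k ∈ Finset.range n, u (k+1) * (E (k+1) - E (k+2))
      = ∑ k ∈ Finset.range n, (u (k+1) - u k) * E (k+1) := by
    apply cd_abel2 n u E
    · rw [hEtop (n+1) (by omega)]; ring
    · have hu0 : u 0 = 0 := by simp [hudef]
      rw [hu0]; ring
  have hstep : ∀ k : ℕ, u (k+1) - u k = 1/(n:ℝ) := by
    intro k
    simp only [hudef]
    push_cast
    field_simp
    ring
  -- named sums
  set P : ℝ := ∑ k ∈ Finset.range n, (E (k+1) - E (k+2)) * (u (k+1) * Real.log (u (k+1))) with hPdef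
  set Q : ℝ := ∑ k ∈ Finset.range n, (1/(n:ℝ)) * E (k+1) with hQdef
  set R : ℝ := ∑ k ∈ Finset.range n, (1/(n:ℝ)) * (E (k+1) * Real.log (E (k+1))) with hRdef
  have hSA : ∑ k ∈ Finset.range n, (E (k+1) * (V (k+1) - V k)
      + (1/(n:ℝ)) * (E (k+1) * Real.log (E (k+1)))) = (P - Q) + R := by
    rw [Finset.sum_add_distrib, habel_A]
    have h1 : ∑ k ∈ Finset.range n, (E (k+1) - E (k+2)) * V (k+1)
        = ∑ k ∈ Finset.range n, ((E (k+1) - E (k+2)) * (u (k+1) * Real.log (u (k+1)))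
            - u (k+1) * (E (k+1) - E (k+2))) := by
      apply Finset.sum_congr rfl
      intro k hk
      simp only [hVdef]
      ring
    rw [h1, Finset.sum_sub_distrib, habel_E]
    have h2 : ∑ k ∈ Finset.range n, (u (k+1) - u k) * E (k+1) = Q := by
      rw [hQdef]
      apply Finset.sum_congr rfl
      intro k hk
      rw [hstep k]
    rw [h2]
  have hSB : ∑ k ∈ Finset.range n, (u (k+1) * (W (k+1) - W (k+2))
      + (E (k+1) - E (k+2)) * (u (k+1) * Real.log (u (k+1)))) = (R - Q) + P := by
    rw [Finset.sum_add_distrib, habel_W, ← hPdef]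
    have h1 : ∑ k ∈ Finset.range n, (u (k+1) - u k) * W (k+1)
        = ∑ k ∈ Finset.range n, ((1/(n:ℝ)) * (E (k+1) * Real.log (E (k+1))) - (1/(n:ℝ)) * E (k+1)) := by
      apply Finset.sum_congr rfl
      intro k hk
      rw [hstep k]
      simp only [hWdef]
      ring
    rw [h1, Finset.sum_sub_distrib, ← hRdef, ← hQdef]
  have hmain : (∫ x in Set.Ico (0:ℝ) 1, fstar x * Real.log (x * fstar x))
      = (∫ y in Set.Ici (0:ℝ), (1 - Lstar y) * Real.log (y * (1 - Lstar y))) := by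
    rw [hIA, hIB, hreflB, hSA, hSB]
    ring
  exact ⟨hcd1, hcd2, by rw [hmain]⟩
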